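/- Let φ = (p,q) be an almost complex immersion into S³×S³ with isothermal coordinates (u,v), satisfying J(p_u,q_u) = (p_v,q_v). Set α = p⁻¹p_u, β = p⁻¹p_v, γ = q⁻¹q_u, δ = q⁻¹q_v. Then γ = (√3/2)β + (1/2)α and δ = (1/2)β − (√3/2)α. -/

import Mathlib

open Quaternion

noncomputable section

/-- The almost complex structure `J` at the point `(p, q)` of `S³ × S³`,
acting on `T_p S³ × T_q S³ ⊆ ℍ × ℍ`:
`J(U,V) = (1/√3)(2pq⁻¹V − U, −2qp⁻¹U + V)`. -/
def Jmap (p q : ℍ[ℝ]) (W : ℍ[ℝ] × ℍ[ℝ]) : ℍ[ℝ] × ℍ[ℝ] :=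
  (Real.sqrt 3)⁻¹ •
    ((2 : ℝ) • (p * q⁻¹ * W.2) - W.1, -((2 : ℝ) • (q * p⁻¹ * W.1)) + W.2)

/-- The almost product structure `P` at `(p, q)`: `P(U,V) = (pq⁻¹V, qp⁻¹U)`. -/
def Pmap (p q : ℍ[ℝ]) (W : ℍ[ℝ] × ℍ[ℝ]) : ℍ[ℝ] × ℍ[ℝ] :=
  (p * q⁻¹ * W.2, q * p⁻¹ * W.1)

/-- The product round metric on `S³ × S³` (on tangent pairs). -/
def prodInner (X Y : ℍ[ℝ] × ℍ[ℝ]) : ℝ :=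
  (inner ℝ X.1 Y.1 : ℝ) + (inner ℝ X.2 Y.2 : ℝ)

/-- The nearly Kähler metric `g(X,Y) = (1/2)(⟨X,Y⟩ + ⟨JX,JY⟩)` at `(p,q)`. -/
def gmet (p q : ℍ[ℝ]) (X Y : ℍ[ℝ] × ℍ[ℝ]) : ℝ :=
  (1 / 2) * (prodInner X Y + prodInner (Jmap p q X) (Jmap p q Y))
/-- for an almost complex immersion `φ = (p,q)` in isothermal
coordinates, with `α = p⁻¹p_u`, `β = p⁻¹p_v`, `γ = q⁻¹q_u`, `δ = q⁻¹q_v`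
and the almost complex condition `J(p_u, q_u) = (p_v, q_v)`, one has
`γ = (√3/2)β + (1/2)α` and `δ = (1/2)β − (√3/2)α`. -/
theorem stmt_16 (p q pu pv qu qv : ℍ[ℝ]) (hp : ‖p‖ = 1) (hq : ‖q‖ = 1)
    (hac : Jmap p q (pu, qu) = (pv, qv)) :
    q⁻¹ * qu = (Real.sqrt 3 / 2) • (p⁻¹ * pv) + (1 / 2 : ℝ) • (p⁻¹ * pu) ∧
    q⁻¹ * qv = (1 / 2 : ℝ) • (p⁻¹ * pv) - (Real.sqrt 3 / 2) • (p⁻¹ * pu) := by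
  have hp0 : p ≠ 0 := by intro h; simp [h] at hp
  have hq0 : q ≠ 0 := by intro h; simp [h] at hq
  have hs2 : Real.sqrt 3 * Real.sqrt 3 = 3 := Real.mul_self_sqrt (by norm_num)
  have hs : Real.sqrt 3 ≠ 0 := by positivity
  simp only [Jmap, Prod.smul_mk, Prod.mk.injEq] at hac
  obtain ⟨h1, h2⟩ := hac
  subst h1 h2
  constructor <;>
  · simp only [mul_smul_comm, mul_add, mul_sub, mul_neg, ← mul_assoc,
      inv_mul_cancel_left₀ hp0, inv_mul_cancel_left₀ hq0]
    match_scalars <;> field_simp <;> ring_nf <;>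
      first
        | rfl
        | ring1
        | linear_combination (2 * Real.sqrt 3) * hs2
        | linear_combination (-2 * Real.sqrt 3) * hs2
        | linear_combination (1 + 2 * Real.sqrt 3) * hs2
        | linear_combination (-1 - 2 * Real.sqrt 3) * hs2
        | linear_combination (2 + 2 * Real.sqrt 3) * hs2
        | linear_combination (-2 - 2 * Real.sqrt 3) * hs2
        | (simp only [show Real.sqrt 3 ^ 3 = Real.sqrt 3 ^ 2 * Real.sqrt 3 by ring,
            Real.sq_sqrt (show (0 : ℝ) ≤ 3 by norm_num)]; ring)
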